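/- arXiv:2003.07730 — 4 statements merged into one kernel-verified Lean document; each statement's English description precedes it below -/
import Mathlib

section
/- Let M ∈ ℝ and let g : ℝ → ℝ be three times continuously differentiable on [M, ∞) with g'''(η) + g(η)·g''(η) = 0 for all η ≥ M, g''(M) > 0, g(M) > 0, and g'(η) ≥ 0 for all η ≥ M (so g is nondecreasing on [M, ∞)). Then the improper integral ∫_M^∞ g''(η) dη satisfies ∫_M^∞ g''(η) dη ≤ g''(M)·[g(M)]⁻¹. -/
open Set Filter MeasureTheory Topology

/-- Bound of the improper integral of `g''` over `[M, ∞)` for a solution of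
the normalized Blasius equation `g''' + g·g'' = 0`. -/
theorem improper_integral_bound
    (M : ℝ) (g : ℝ → ℝ)
    (hg : ContDiffOn ℝ 3 g (Set.Ici M))
    (hODE : ∀ η ≥ M,
      iteratedDeriv 3 g η + g η * iteratedDeriv 2 g η = 0)
    (hg''M : 0 < iteratedDeriv 2 g M)
    (hgM : 0 < g M)
    (hg' : ∀ η ≥ M, 0 ≤ deriv g η) :
    ∃ I : ℝ,
      Tendsto (fun T => ∫ η in M..T, iteratedDeriv 2 g η) atTop (nhds I) ∧
      I ≤ iteratedDeriv 2 g M * (g M)⁻¹ := by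
  set h : ℝ → ℝ := iteratedDeriv 2 g with hh
  have hhdef : h = deriv (deriv g) := by
    simp [hh, iteratedDeriv_succ, iteratedDeriv_one]
  have h3def : iteratedDeriv 3 g = deriv h := by
    rw [hh, show (3 : ℕ) = 2 + 1 from rfl, iteratedDeriv_succ]
  -- smoothness on the open half line
  have hgIoi : ContDiffOn ℝ 3 g (Ioi M) := hg.mono Ioi_subset_Ici_self
  have hdg : ContDiffOn ℝ 2 (deriv g) (Ioi M) :=
    hgIoi.deriv_of_isOpen isOpen_Ioi (by norm_num)
  have hdh : ContDiffOn ℝ 1 h (Ioi M) := by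
    rw [hhdef]; exact hdg.deriv_of_isOpen isOpen_Ioi (by norm_num)
  have hgdiff : ∀ x ∈ Ioi M, HasDerivAt g (deriv g x) x := fun x hx =>
    (((hgIoi.differentiableOn (by norm_num)) x hx).differentiableAt
      (isOpen_Ioi.mem_nhds hx)).hasDerivAt
  have hφdiff : ∀ x ∈ Ioi M, HasDerivAt (deriv g) (h x) x := fun x hx => by
    rw [hhdef]
    exact (((hdg.differentiableOn (by norm_num)) x hx).differentiableAt
      (isOpen_Ioi.mem_nhds hx)).hasDerivAt
  have hhdiff : ∀ x ∈ Ioi M, HasDerivAt h (-(g x * h x)) x := fun x hx => by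
    have hd := (((hdh.differentiableOn (by norm_num)) x hx).differentiableAt
      (isOpen_Ioi.mem_nhds hx)).hasDerivAt
    have : deriv h x = -(g x * h x) := by
      have := hODE x (le_of_lt hx)
      rw [h3def] at this
      linarith
    rwa [this] at hd
  have hgcontAt : ∀ x ∈ Ioi M, ContinuousAt g x := fun x hx =>
    (hgdiff x hx).continuousAt
  -- monotonicity of g
  have gmono : MonotoneOn g (Ici M) := by
    apply monotoneOn_of_deriv_nonneg (convex_Ici M) hg.continuousOn
    · intro x hx
      rw [interior_Ici] at hx
      exact ((hgdiff x hx).differentiableAt).differentiableWithinAt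
    · intro x hx
      rw [interior_Ici] at hx
      exact hg' x (le_of_lt hx)
  have gpos : ∀ x ∈ Ici M, 0 < g x := fun x hx =>
    lt_of_lt_of_le hgM (gmono self_mem_Ici hx hx)
  -- the primitive of g
  set G : ℝ → ℝ := fun η => ∫ s in M..η, g s with hGdef
  have gInt : ∀ x, M ≤ x → IntervalIntegrable g MeasureTheory.volume M x := by
    intro x hx
    apply ContinuousOn.intervalIntegrable
    rw [uIcc_of_le hx]
    exact hg.continuousOn.mono (fun y hy => hy.1)
  have GM : G M = 0 := intervalIntegral.integral_same
  have Gderiv : ∀ x ∈ Ioi M, HasDerivAt G (g x) x := by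
    intro x hx
    exact intervalIntegral.integral_hasDerivAt_right (gInt x (le_of_lt hx))
      (ContinuousAt.stronglyMeasurableAtFilter isOpen_Ioi hgcontAt x hx)
      (hgcontAt x hx)
  have Gmono : ∀ a, M ≤ a → ∀ b, a ≤ b → G a ≤ G b := by
    intro a ha b hb
    have h1 : G b - G a = ∫ s in a..b, g s := by
      rw [hGdef]
      simp only
      rw [← intervalIntegral.integral_interval_sub_left (gInt b (le_trans ha hb)) (gInt a ha)]
    have h2 : 0 ≤ ∫ s in a..b, g s := by
      apply intervalIntegral.integral_nonneg hb
      intro u hu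
      exact le_of_lt (gpos u (le_trans ha hu.1))
    linarith
  have Glb : ∀ x, M ≤ x → g M * (x - M) ≤ G x := by
    intro x hx
    have : ∫ s in M..x, g M ≤ ∫ s in M..x, g s := by
      apply intervalIntegral.integral_mono_on hx intervalIntegrable_const (gInt x hx)
      intro u hu
      exact gmono self_mem_Ici hu.1 hu.1
    simpa [mul_comm] using this
  have Gub : ∀ x, M ≤ x → x ≤ M + 1 → G x ≤ g (M + 1) * (x - M) := by
    intro x hx hx'
    have : ∫ s in M..x, g s ≤ ∫ s in M..x, g (M + 1) := by
      apply intervalIntegral.integral_mono_on hx (gInt x hx) intervalIntegrable_const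
      intro u hu
      exact gmono hu.1 (by simp : M ≤ M + 1) (le_trans hu.2 hx')
    simpa [mul_comm] using this
  -- constancy of h * exp ∘ G on (M, ∞)
  have Fderiv : ∀ x ∈ Ioi M,
      HasDerivAt (fun y => h y * Real.exp (G y)) 0 x := by
    intro x hx
    have : HasDerivAt (fun y => h y * Real.exp (G y))
        (-(g x * h x) * Real.exp (G x) + h x * (Real.exp (G x) * g x)) x :=
      (hhdiff x hx).mul ((Gderiv x hx).exp)
    convert this using 1
    ring
  have Fconst0 : ∀ a, M < a → ∀ b, a ≤ b →
      h b * Real.exp (G b) = h a * Real.exp (G a) := by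
    intro a ha b hab
    have := constant_of_has_deriv_right_zero (f := fun y => h y * Real.exp (G y))
      (a := a) (b := b)
      (fun x hx => ((Fderiv x (lt_of_lt_of_le ha hx.1)).continuousAt).continuousWithinAt)
      (fun x hx => ((Fderiv x (lt_of_lt_of_le ha hx.1)).hasDerivWithinAt))
    exact this b ⟨hab, le_refl b⟩
  have Fconst : ∀ a, M < a → ∀ b, M < b →
      h b * Real.exp (G b) = h a * Real.exp (G a) := by
    intro a ha b hb
    rcases le_total a b with hab | hab
    · exact Fconst0 a ha b hab
    · exact (Fconst0 b hb a hab).symm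
  -- identifying the constant with h M via the mean value theorem
  have hφM : HasDerivAt (deriv g) (h M) M := by
    have hd : DifferentiableAt ℝ (deriv g) M := by
      apply differentiableAt_of_deriv_ne_zero
      rw [← funext_iff.mp hhdef M]
      exact ne_of_gt hg''M
    have := hd.hasDerivAt
    rwa [← funext_iff.mp hhdef M] at this
  have slope_ex : ∀ η, M < η → ∃ ξ, M < ξ ∧ ξ < η ∧ slope (deriv g) M η = h ξ := by
    intro η hη
    have hφcont : ContinuousOn (deriv g) (Icc M η) := by
      intro x hx
      rcases eq_or_lt_of_le hx.1 with rfl | hx1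
      · exact hφM.continuousAt.continuousWithinAt
      · exact (hφdiff x hx1).continuousAt.continuousWithinAt
    obtain ⟨ξ, hξ, e⟩ := exists_hasDerivAt_eq_slope (deriv g) h hη hφcont
      (fun x hx => hφdiff x hx.1)
    refine ⟨ξ, hξ.1, hξ.2, ?_⟩
    rw [slope_def_field, ← e]
  have key : ∀ x, M < x → h x * Real.exp (G x) = h M := by
    intro x hx
    have h1 : Tendsto (slope (deriv g) M) (𝓝[>] M) (𝓝 (h M)) :=
      (hasDerivAt_iff_tendsto_slope.mp hφM).mono_left
        (nhdsWithin_mono M (fun y hy => ne_of_gt hy))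
    choose! ξ hξ1 hξ2 hξ3 using slope_ex
    have hmem : Ioo M (M + 1) ∈ 𝓝[>] M := Ioo_mem_nhdsGT (by linarith)
    have hGx0 : Tendsto (fun η => G (ξ η)) (𝓝[>] M) (𝓝 0) := by
      apply squeeze_zero' (g := fun η => g (M + 1) * (η - M))
      · filter_upwards [hmem] with η hη
        have := Gmono M le_rfl (ξ η) (le_of_lt (hξ1 η hη.1))
        rwa [GM] at this
      · filter_upwards [hmem] with η hη
        exact le_trans (Gmono (ξ η) (le_of_lt (hξ1 η hη.1)) η (le_of_lt (hξ2 η hη.1)))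
          (Gub η (le_of_lt hη.1) (le_of_lt hη.2))
      · have : Tendsto (fun η : ℝ => g (M + 1) * (η - M)) (𝓝 M) (𝓝 (g (M + 1) * (M - M))) :=
          (continuous_const.mul (continuous_id.sub continuous_const)).tendsto M
        simpa using this.mono_left nhdsWithin_le_nhds
    have h2 : Tendsto (slope (deriv g) M) (𝓝[>] M) (𝓝 (h x * Real.exp (G x))) := by
      have hlim : Tendsto (fun η => (h x * Real.exp (G x)) * Real.exp (-(G (ξ η))))
          (𝓝[>] M) (𝓝 ((h x * Real.exp (G x)) * Real.exp (-0))) :=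
        tendsto_const_nhds.mul ((Real.continuous_exp.tendsto _).comp hGx0.neg)
      rw [neg_zero, Real.exp_zero, mul_one] at hlim
      apply Tendsto.congr' _ hlim
      filter_upwards [self_mem_nhdsWithin] with η hη
      have hξη : M < ξ η := hξ1 η hη
      have hF := Fconst x hx (ξ η) hξη
      rw [hξ3 η hη, ← hF, Real.exp_neg, mul_assoc,
        mul_inv_cancel₀ (Real.exp_ne_zero _), mul_one]
    exact tendsto_nhds_unique h2 h1
  -- positivity and exponential bound for h on (M, ∞)
  have hval : ∀ x, M < x → h x = h M * Real.exp (-(G x)) := by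
    intro x hx
    rw [← key x hx, Real.exp_neg, mul_assoc, mul_inv_cancel₀ (Real.exp_ne_zero _), mul_one]
  have hpos : ∀ x, M < x → 0 < h x := by
    intro x hx
    rw [hval x hx]
    exact mul_pos hg''M (Real.exp_pos _)
  have hbound : ∀ x, M < x → h x ≤ h M * Real.exp (-(g M) * (x - M)) := by
    intro x hx
    rw [hval x hx]
    apply mul_le_mul_of_nonneg_left _ (le_of_lt hg''M)
    apply Real.exp_le_exp.mpr
    have := Glb x (le_of_lt hx)
    linarith
  -- integrability of the bounding function and of h
  have hBint : IntegrableOn (fun x => h M * Real.exp (-(g M) * (x - M))) (Ioi M) := by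
    have h0 : IntegrableOn (fun x : ℝ => Real.exp (-(g M) * x)) (Ioi M) :=
      exp_neg_integrableOn_Ioi M hgM
    have h1 := h0.const_mul (h M * Real.exp (g M * M))
    have he : (fun x : ℝ => h M * Real.exp (-(g M) * (x - M)))
        = fun x => (h M * Real.exp (g M * M)) * Real.exp (-(g M) * x) := by
      funext x
      rw [mul_assoc, ← Real.exp_add]
      ring_nf
    rw [he]
    exact h1
  have hint : IntegrableOn h (Ioi M) := by
    apply Integrable.mono' hBint
      (hdh.continuousOn.aestronglyMeasurable measurableSet_Ioi)
    rw [ae_restrict_iff' measurableSet_Ioi]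
    apply ae_of_all
    intro x hx
    rw [Real.norm_eq_abs, abs_of_pos (hpos x hx)]
    exact hbound x hx
  -- value of the integral of the bounding function
  have hBval : ∫ x in Ioi M, h M * Real.exp (-(g M) * (x - M)) = h M * (g M)⁻¹ := by
    have hFd : ∀ x ∈ Ici M, HasDerivAt
        (fun y => -(h M * (g M)⁻¹) * Real.exp (-(g M) * (y - M)))
        (h M * Real.exp (-(g M) * (x - M))) x := by
      intro x _
      have h1 : HasDerivAt (fun y : ℝ => -(g M) * (y - M)) (-(g M)) x := by
        simpa using ((hasDerivAt_id x).sub_const M).const_mul (-(g M))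
      have : HasDerivAt (fun y => -(h M * (g M)⁻¹) * Real.exp (-(g M) * (y - M)))
          (-(h M * (g M)⁻¹) * (Real.exp (-(g M) * (x - M)) * -(g M))) x :=
        (h1.exp).const_mul (-(h M * (g M)⁻¹))
      convert this using 1
      field_simp
    have htends : Tendsto (fun y => -(h M * (g M)⁻¹) * Real.exp (-(g M) * (y - M)))
        atTop (𝓝 0) := by
      have harg : Tendsto (fun y : ℝ => -(g M) * (y - M)) atTop atBot := by
        apply (tendsto_const_mul_atBot_of_neg (by linarith)).mpr
        exact tendsto_atTop_add_const_right atTop (-M) tendsto_id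
      have hexp : Tendsto (fun y : ℝ => Real.exp (-(g M) * (y - M))) atTop (𝓝 0) :=
        Real.tendsto_exp_atBot.comp harg
      have := hexp.const_mul (-(h M * (g M)⁻¹))
      simpa using this
    have := integral_Ioi_of_hasDerivAt_of_tendsto'
      (fun x hx => hFd x hx) hBint htends
    rw [this]
    simp
  refine ⟨∫ x in Ioi M, h x, ?_, ?_⟩
  · exact intervalIntegral_tendsto_integral_Ioi M hint tendsto_id
  · calc ∫ x in Ioi M, h x
        ≤ ∫ x in Ioi M, h M * Real.exp (-(g M) * (x - M)) :=
          setIntegral_mono_on hint hBint measurableSet_Ioi (fun x hx => hbound x hx)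
      _ = h M * (g M)⁻¹ := hBval
end

section
/- Let δ ∈ ℝ with δ ≠ 0, let Φ : ℝ × ℝ × ℝ → ℝ, and define φ(η, u, v, w) := η^((1−3δ)/δ) · Φ(η^(−1/δ)·u, η^((δ−1)/δ)·v, η^((2δ−1)/δ)·w) for η > 0. Suppose f : (0, ∞) → ℝ is three times differentiable and satisfies f'''(η) = φ(η, f(η), f'(η), f''(η)) for all η > 0. Then for every λ > 0 the scaled function f*(t) := λ·f(λ^(−δ)·t) satisfies f*'''(t) = φ(t, f*(t), f*'(t), f*''(t)) for all t > 0. -/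
open Set Filter

/-- Scaling invariance of the class of third-order boundary layer equations
`f''' = φ(η, f, f', f'')` with
`φ(η,u,v,w) = η^((1−3δ)/δ) Φ(η^(−1/δ) u, η^((δ−1)/δ) v, η^((2δ−1)/δ) w)`
under the group `f* = λ f`, `η* = λ^δ η`. -/
theorem scaling_invariance_class
    (δ : ℝ) (hδ : δ ≠ 0)
    (Φ : ℝ × ℝ × ℝ → ℝ)
    (φ : ℝ → ℝ → ℝ → ℝ → ℝ)
    (hφ : ∀ η > (0 : ℝ), ∀ u v w : ℝ,
      φ η u v w = η ^ ((1 - 3 * δ) / δ) *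
        Φ (η ^ (-(1 : ℝ) / δ) * u, η ^ ((δ - 1) / δ) * v,
           η ^ ((2 * δ - 1) / δ) * w))
    (f : ℝ → ℝ)
    (hf1 : DifferentiableOn ℝ f (Set.Ioi (0 : ℝ)))
    (hf2 : DifferentiableOn ℝ (deriv f) (Set.Ioi (0 : ℝ)))
    (hf3 : DifferentiableOn ℝ (deriv (deriv f)) (Set.Ioi (0 : ℝ)))
    (hODE : ∀ η > (0 : ℝ),
      iteratedDeriv 3 f η = φ η (f η) (deriv f η) (iteratedDeriv 2 f η)) :
    ∀ l > (0 : ℝ),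
      ∀ fs : ℝ → ℝ, fs = (fun t => l * f (l ^ (-δ) * t)) →
      ∀ t > (0 : ℝ),
        iteratedDeriv 3 fs t =
          φ t (fs t) (deriv fs t) (iteratedDeriv 2 fs t) := by
  intro l hl fs hfs t ht
  subst hfs
  set c : ℝ := l ^ (-δ) with hc
  have hcpos : 0 < c := Real.rpow_pos_of_pos hl _
  -- general chain rule helper
  have key : ∀ g : ℝ → ℝ, DifferentiableOn ℝ g (Set.Ioi (0:ℝ)) →
      ∀ a : ℝ, ∀ s, 0 < s →
      HasDerivAt (fun x => a * g (c * x)) (a * c * deriv g (c * s)) s := by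
    intro g hg a s hs
    have h1 : 0 < c * s := mul_pos hcpos hs
    have hga : DifferentiableAt ℝ g (c * s) :=
      hg.differentiableAt (Ioi_mem_nhds h1)
    have h2 : HasDerivAt (fun x : ℝ => c * x) c s := by
      simpa using (hasDerivAt_id s).const_mul c
    have h3 := (hga.hasDerivAt.comp s h2).const_mul a
    refine h3.congr_deriv ?_
    ring
  -- first derivative
  have hfs1 : ∀ s, 0 < s → deriv (fun x => l * f (c * x)) s = l * c * deriv f (c * s) := by
    intro s hs
    exact (key f hf1 l s hs).deriv
  -- second derivative
  have hfs2 : ∀ s, 0 < s →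
      deriv (deriv (fun x => l * f (c * x))) s
        = (l * c) * c * deriv (deriv f) (c * s) := by
    intro s hs
    have hev : deriv (fun x => l * f (c * x)) =ᶠ[nhds s]
        (fun x => (l * c) * deriv f (c * x)) := by
      filter_upwards [Ioi_mem_nhds hs] with x hx
      have := hfs1 x hx
      simpa [mul_assoc] using this
    rw [hev.deriv_eq]
    exact (key (deriv f) hf2 (l * c) s hs).deriv
  -- third derivative
  have hfs3 : deriv (deriv (deriv (fun x => l * f (c * x)))) t
      = ((l * c) * c) * c * deriv (deriv (deriv f)) (c * t) := by
    have hev : deriv (deriv (fun x => l * f (c * x))) =ᶠ[nhds t]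
        (fun x => ((l * c) * c) * deriv (deriv f) (c * x)) := by
      filter_upwards [Ioi_mem_nhds ht] with x hx
      exact hfs2 x hx
    rw [hev.deriv_eq]
    exact (key (deriv (deriv f)) hf3 ((l * c) * c) t ht).deriv
  have hct : 0 < c * t := mul_pos hcpos ht
  have hODE' := hODE (c * t) hct
  have hit3 : ∀ g : ℝ → ℝ, iteratedDeriv 3 g = deriv (deriv (deriv g)) := by
    intro g
    simp [iteratedDeriv_succ, iteratedDeriv_one]
  have hit2 : ∀ g : ℝ → ℝ, iteratedDeriv 2 g = deriv (deriv g) := by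
    intro g
    simp [iteratedDeriv_succ, iteratedDeriv_one]
  rw [hit3, hit2, hφ (c*t) hct] at hODE'
  rw [hit3, hit2, hfs3, hfs2 t ht, hfs1 t ht, hφ t ht, hODE']
  simp only []
  -- now pure algebra of rpow
  have hml : ∀ x : ℝ, (c*t) ^ x = l ^ (-δ*x) * t ^ x := by
    intro x
    rw [Real.mul_rpow hcpos.le ht.le, hc, ← Real.rpow_mul hl.le]
  have hle : ∀ x y : ℝ, l ^ x * l ^ y = l ^ (x + y) := fun x y =>
    (Real.rpow_add hl x y).symm
  rw [hml, hml, hml, hml]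
  have e1 : -δ * (-1/δ) = 1 := by field_simp
  have e2 : -δ * ((δ-1)/δ) = 1 - δ := by field_simp; ring
  have e3 : -δ * ((2*δ-1)/δ) = 1 - 2*δ := by field_simp; ring
  have e4 : -δ * ((1-3*δ)/δ) = 3*δ - 1 := by field_simp; ring
  rw [e1, e2, e3, e4, Real.rpow_one]
  have hc1 : l ^ (1 - δ) = l * c := by
    rw [show (1 - δ) = 1 + -δ by ring, Real.rpow_add hl, Real.rpow_one, hc]
  have hc2 : l ^ (1 - 2*δ) = l * c * c := by
    rw [show (1 - 2*δ) = 1 + -δ + -δ by ring, Real.rpow_add hl, Real.rpow_add hl,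
      Real.rpow_one, hc]
  have hc3 : l * c * c * c * l ^ (3*δ - 1) = 1 := by
    have h0 : l * c * c * c * l ^ (3*δ - 1)
        = l ^ (1:ℝ) * l ^ (-δ) * l ^ (-δ) * l ^ (-δ) * l ^ (3*δ - 1) := by
      rw [Real.rpow_one, hc]
    rw [h0, ← Real.rpow_add hl, ← Real.rpow_add hl, ← Real.rpow_add hl,
      ← Real.rpow_add hl, show (1:ℝ) + -δ + -δ + -δ + (3*δ - 1) = 0 by ring,
      Real.rpow_zero]
  rw [hc1, hc2]
  calc l * c * c * c * (l ^ (3*δ-1) * t ^ ((1-3*δ)/δ) *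
        Φ (l * (t ^ (-1/δ)) * f (c*t), l * c * (t ^ ((δ-1)/δ)) * deriv f (c*t),
           l * c * c * (t ^ ((2*δ-1)/δ)) * deriv (deriv f) (c*t)))
      = (l * c * c * c * l ^ (3*δ-1)) * (t ^ ((1-3*δ)/δ) *
        Φ (l * (t ^ (-1/δ)) * f (c*t), l * c * (t ^ ((δ-1)/δ)) * deriv f (c*t),
           l * c * c * (t ^ ((2*δ-1)/δ)) * deriv (deriv f) (c*t))) := by ring
    _ = t ^ ((1-3*δ)/δ) *
        Φ (t ^ (-1/δ) * (l * f (c*t)), t ^ ((δ-1)/δ) * (l * c * deriv f (c*t)),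
           t ^ ((2*δ-1)/δ) * (l * c * c * deriv (deriv f) (c*t))) := by
        rw [hc3, one_mul]
        ring_nf
end

section
/- Let δ ∈ ℝ with δ ≠ 0 and δ ≠ 1, let d ≠ 0, let Φ : ℝ × ℝ × ℝ → ℝ, and define φ(η, u, v, w) := η^((1−3δ)/δ) · Φ(η^(−1/δ)·u, η^((δ−1)/δ)·v, η^((2δ−1)/δ)·w) for η > 0. Suppose f* : [0, ∞) → ℝ is three times continuously differentiable, satisfies f*'''(t) = φ(t, f*(t), f*'(t), f*''(t)) for all t > 0, with f*(0) = f*'(0) = 0, f*''(0) = p, and f*'(t) → L as t → ∞ where L/d > 0. Set λ := (L/d)^(1/(1−δ)). Then the rescaled function f(η) := λ^(−1)·f*(λ^δ·η) satisfies f'''(η) = φ(η, f(η), f'(η), f''(η)) for all η > 0, f(0) = f'(0) = 0, f''(0) = λ^(2δ−1)·p, and f'(η) → d as η → ∞. -/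
open Set Filter


lemma scale_diff {c a : ℝ} (hc : c ≠ 0) (ha : a ≠ 0) (g : ℝ → ℝ) (x : ℝ)
    (H : DifferentiableAt ℝ (fun y => c * g (a * y)) x) :
    DifferentiableAt ℝ g (a * x) := by
  have hg : g = fun y => c⁻¹ * ((fun y => c * g (a * y)) (a⁻¹ * y)) := by
    funext y
    have : a * (a⁻¹ * y) = y := by field_simp
    simp only [this]
    field_simp
  have hx : a⁻¹ * (a * x) = x := by field_simp
  have H' : DifferentiableAt ℝ (fun y => c * g (a * y)) (a⁻¹ * (a * x)) := by
    rw [hx]; exact H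
  have hin : DifferentiableAt ℝ (fun y : ℝ => a⁻¹ * y) (a * x) :=
    (differentiable_id.const_mul a⁻¹).differentiableAt
  have := (H'.comp (a * x) hin).const_mul c⁻¹
  rw [hg]
  exact this

lemma scale_deriv {c a : ℝ} (hc : c ≠ 0) (ha : a ≠ 0) (g : ℝ → ℝ) (x : ℝ) :
    deriv (fun y => c * g (a * y)) x = (c * a) * deriv g (a * x) := by
  by_cases H : DifferentiableAt ℝ g (a * x)
  · have hin : HasDerivAt (fun y : ℝ => a * y) a x := by
      simpa using (hasDerivAt_id x).const_mul a
    have h2 : HasDerivAt (fun y => c * g (a * y)) (c * (deriv g (a * x) * a)) x := by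
      exact (H.hasDerivAt.comp x hin).const_mul c
    rw [h2.deriv]; ring
  · have H2 : ¬ DifferentiableAt ℝ (fun y => c * g (a * y)) x :=
      fun h => H (scale_diff hc ha g x h)
    rw [deriv_zero_of_not_differentiableAt H2, deriv_zero_of_not_differentiableAt H]
    ring
/-- The non-iterative transformation method for the class of boundary value
problems `f''' = φ(η, f, f', f'')`, `f(0) = f'(0) = 0`, `f'(∞) = d`:
solving the normalized initial value problem and rescaling with
`λ = (L/d)^(1/(1−δ))` produces the solution of the boundary value problem. -/
theorem non_iterative_transformation_method
    (δ : ℝ) (hδ0 : δ ≠ 0) (hδ1 : δ ≠ 1)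
    (d : ℝ) (hd : d ≠ 0)
    (Φ : ℝ × ℝ × ℝ → ℝ)
    (φ : ℝ → ℝ → ℝ → ℝ → ℝ)
    (hφ : ∀ η > (0 : ℝ), ∀ u v w : ℝ,
      φ η u v w = η ^ ((1 - 3 * δ) / δ) *
        Φ (η ^ (-(1 : ℝ) / δ) * u, η ^ ((δ - 1) / δ) * v,
           η ^ ((2 * δ - 1) / δ) * w))
    (p L : ℝ)
    (fs : ℝ → ℝ)
    (hfs : ContDiffOn ℝ 3 fs (Set.Ici (0 : ℝ)))
    (hODEs : ∀ t > (0 : ℝ),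
      iteratedDeriv 3 fs t = φ t (fs t) (deriv fs t) (iteratedDeriv 2 fs t))
    (hfs0 : fs 0 = 0) (hfs'0 : deriv fs 0 = 0)
    (hfs''0 : iteratedDeriv 2 fs 0 = p)
    (hlim : Tendsto (deriv fs) atTop (nhds L))
    (hLd : 0 < L / d)
    (l : ℝ) (hl : l = (L / d) ^ ((1 : ℝ) / (1 - δ)))
    (f : ℝ → ℝ) (hf : f = fun η => l⁻¹ * fs (l ^ δ * η)) :
    (∀ η > (0 : ℝ),
      iteratedDeriv 3 f η = φ η (f η) (deriv f η) (iteratedDeriv 2 f η)) ∧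
    f 0 = 0 ∧ deriv f 0 = 0 ∧
    iteratedDeriv 2 f 0 = l ^ (2 * δ - 1) * p ∧
    Tendsto (deriv f) atTop (nhds d) := by
  have hlpos : 0 < l := hl ▸ Real.rpow_pos_of_pos hLd _
  have hl0 : l ≠ 0 := ne_of_gt hlpos
  have hapos : 0 < l ^ δ := Real.rpow_pos_of_pos hlpos δ
  have ha0 : l ^ δ ≠ 0 := ne_of_gt hapos
  have hmul : ∀ a b : ℝ, l ^ a * l ^ b = l ^ (a + b) := fun a b =>
    (Real.rpow_add hlpos a b).symm
  have hinv : l⁻¹ = l ^ (-1 : ℝ) := (Real.rpow_neg_one l).symm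
  -- first derivative
  have h1 : deriv f = fun η => l ^ (δ - 1) * deriv fs (l ^ δ * η) := by
    funext x
    rw [hf, scale_deriv (inv_ne_zero hl0) ha0 fs x]
    congr 1
    rw [hinv, hmul]
    ring_nf
  have h2 : deriv (deriv f) = fun η => l ^ (2 * δ - 1) * deriv (deriv fs) (l ^ δ * η) := by
    funext x
    rw [h1, scale_deriv (by positivity) ha0 (deriv fs) x]
    congr 1
    rw [hmul]
    ring_nf
  have h3 : deriv (deriv (deriv f)) =
      fun η => l ^ (3 * δ - 1) * deriv (deriv (deriv fs)) (l ^ δ * η) := by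
    funext x
    rw [h2, scale_deriv (by positivity) ha0 (deriv (deriv fs)) x]
    congr 1
    rw [hmul]
    ring_nf
  have hit2 : ∀ g : ℝ → ℝ, iteratedDeriv 2 g = deriv (deriv g) := by
    intro g
    rw [iteratedDeriv_succ, iteratedDeriv_one]
  have hit3 : ∀ g : ℝ → ℝ, iteratedDeriv 3 g = deriv (deriv (deriv g)) := by
    intro g
    rw [iteratedDeriv_succ, hit2]
  have hL0 : L ≠ 0 := by
    intro h; rw [h] at hLd; simp at hLd
  have hcoef : l ^ (δ - 1) * L = d := by
    have h1δ : (1 : ℝ) - δ ≠ 0 := sub_ne_zero.mpr (fun h => hδ1 h.symm)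
    have : l ^ (δ - 1) = (L / d)⁻¹ := by
      rw [hl, ← Real.rpow_mul hLd.le,
        show (1 : ℝ) / (1 - δ) * (δ - 1) = -1 by field_simp; ring,
        Real.rpow_neg_one]
    rw [this]
    field_simp
  refine ⟨?_, ?_, ?_, ?_, ?_⟩
  · -- the ODE
    intro η hη
    have ht : 0 < l ^ δ * η := mul_pos hapos hη
    have hsplit : ∀ e : ℝ, (l ^ δ * η) ^ e = l ^ (δ * e) * η ^ e := by
      intro e
      rw [Real.mul_rpow hapos.le hη.le, Real.rpow_mul hlpos.le]
    have hODE' := hODEs _ ht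
    rw [hit3 fs, hit2 fs] at hODE'
    rw [hit3 f, h3]
    simp only [hit2 f, h2]
    simp only [h1]
    rw [hODE', hφ _ ht, hφ _ hη, hf]
    simp only [hsplit]
    rw [show δ * (-(1 : ℝ) / δ) = -1 by field_simp,
        show δ * ((δ - 1) / δ) = δ - 1 by field_simp,
        show δ * ((2 * δ - 1) / δ) = 2 * δ - 1 by field_simp,
        show δ * ((1 - 3 * δ) / δ) = 1 - 3 * δ by field_simp]
    rw [Real.rpow_neg_one]
    rw [show l⁻¹ * η ^ (-(1:ℝ)/δ) * fs (l ^ δ * η) =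
        η ^ (-(1:ℝ)/δ) * (l⁻¹ * fs (l ^ δ * η)) by ring]
    rw [show l ^ (δ - 1) * η ^ ((δ-1)/δ) * deriv fs (l ^ δ * η) =
        η ^ ((δ-1)/δ) * (l ^ (δ - 1) * deriv fs (l ^ δ * η)) by ring]
    rw [show l ^ (2 * δ - 1) * η ^ ((2*δ-1)/δ) * deriv (deriv fs) (l ^ δ * η) =
        η ^ ((2*δ-1)/δ) * (l ^ (2 * δ - 1) * deriv (deriv fs) (l ^ δ * η)) by ring]
    have hkey : ∀ X : ℝ, l ^ (3 * δ - 1) * (l ^ (1 - 3 * δ) * η ^ ((1 - 3*δ)/δ) * X) =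
        η ^ ((1 - 3*δ)/δ) * X := by
      intro X
      rw [show l ^ (3 * δ - 1) * (l ^ (1 - 3 * δ) * η ^ ((1 - 3*δ)/δ) * X) =
          (l ^ (3 * δ - 1) * l ^ (1 - 3 * δ)) * (η ^ ((1 - 3*δ)/δ) * X) by ring,
        hmul, show 3 * δ - 1 + (1 - 3 * δ) = 0 by ring, Real.rpow_zero, one_mul]
    exact hkey _
  · rw [hf]; simp [hfs0]
  · rw [h1]; simp [hfs'0]
  · rw [hit2, h2, ← hit2 fs]
    simp [hfs''0]
  · rw [h1, show d = l ^ (δ - 1) * L from hcoef.symm]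
    have htop : Tendsto (fun η : ℝ => l ^ δ * η) atTop atTop :=
      Tendsto.const_mul_atTop hapos tendsto_id
    exact (hlim.comp htop).const_mul _
end

section
/- Let λ ∈ ℝ and let f : ℝ → ℝ be real-analytic in a neighbourhood of 0, satisfying f'''(η) + (1/2)·f(η)·f''(η) = 0 near 0, with f(0) = f'(0) = 0 and f''(0) = λ. Then the Taylor coefficients C_n := f^(n)(0)/n! of f at 0 satisfy C_2 = λ/2, C_3 = C_4 = 0, C_5 = −λ²/(2·5!), C_6 = C_7 = 0, C_8 = 11·λ³/(2²·8!), C_9 = C_10 = 0, and C_11 = −375·λ⁴/(2³·11!). -/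
open Set Filter

open Finset in
lemma pascal_step (a b : ℕ → ℝ) (n : ℕ) :
    (∑ k ∈ Finset.range (n+1), (n.choose k : ℝ) * (a (k+1) * b (n-k))) +
    (∑ k ∈ Finset.range (n+1), (n.choose k : ℝ) * (a k * b (n+1-k)))
    = ∑ k ∈ Finset.range (n+2), ((n+1).choose k : ℝ) * (a k * b (n+1-k)) := by
  rw [Finset.sum_range_succ' (fun k => ((n+1).choose k : ℝ) * (a k * b (n+1-k))) (n+1),
      Finset.sum_range_succ' (fun k => (n.choose k : ℝ) * (a k * b (n+1-k))) n]
  simp only [Nat.succ_sub_succ, Nat.choose_succ_succ, Nat.cast_add, Nat.choose_zero_right,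
    Nat.cast_one, add_mul, Finset.sum_add_distrib, Nat.sub_zero]
  rw [Finset.sum_range_succ (fun k => (n.choose (k+1) : ℝ) * (a (k+1) * b (n-k))) n]
  simp [Nat.choose_succ_self]
  ring

lemma analytic_itD {f : ℝ → ℝ} {s : Set ℝ} (hf : AnalyticOnNhd ℝ f s) (k : ℕ) :
    AnalyticOnNhd ℝ (iteratedDeriv k f) s := by
  induction k with
  | zero => simpa using hf
  | succ k ih => rw [iteratedDeriv_succ]; exact ih.deriv

lemma itD_const_mul {u : ℝ → ℝ} {s : Set ℝ} (hs : IsOpen s) (hu : AnalyticOnNhd ℝ u s)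
    (c : ℝ) (n : ℕ) : ∀ x ∈ s, iteratedDeriv n (fun y => c * u y) x = c * iteratedDeriv n u x := by
  induction n with
  | zero => intro x hx; simp
  | succ n ih =>
    intro x hx
    have hev : iteratedDeriv n (fun y => c * u y) =ᶠ[nhds x]
        (fun y => c * iteratedDeriv n u y) :=
      Filter.eventually_of_mem (hs.mem_nhds hx) (fun y hy => ih y hy)
    rw [iteratedDeriv_succ, hev.deriv_eq,
      deriv_const_mul c ((analytic_itD hu n x hx).differentiableAt), iteratedDeriv_succ]

lemma my_leibniz {f g : ℝ → ℝ} {s : Set ℝ} (hs : IsOpen s)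
    (hf : AnalyticOnNhd ℝ f s) (hg : AnalyticOnNhd ℝ g s) (n : ℕ) :
    ∀ x ∈ s, iteratedDeriv n (fun y => f y * g y) x
      = ∑ k ∈ Finset.range (n+1), (n.choose k : ℝ) *
          (iteratedDeriv k f x * iteratedDeriv (n-k) g x) := by
  induction n with
  | zero => intro x hx; simp
  | succ n ih =>
    intro x hx
    have hev : iteratedDeriv n (fun y => f y * g y) =ᶠ[nhds x]
        (fun y => ∑ k ∈ Finset.range (n+1), (n.choose k : ℝ) *
          (iteratedDeriv k f y * iteratedDeriv (n-k) g y)) :=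
      Filter.eventually_of_mem (hs.mem_nhds hx) (fun y hy => ih y hy)
    have hdf : ∀ k, DifferentiableAt ℝ (iteratedDeriv k f) x :=
      fun k => (analytic_itD hf k x hx).differentiableAt
    have hdg : ∀ k, DifferentiableAt ℝ (iteratedDeriv k g) x :=
      fun k => (analytic_itD hg k x hx).differentiableAt
    rw [iteratedDeriv_succ, hev.deriv_eq, deriv_fun_sum (A := fun k y => (n.choose k : ℝ) * (iteratedDeriv k f y * iteratedDeriv (n-k) g y)) (fun k _ =>
      ((hdf k).mul (hdg (n - k))).const_mul _)]
    have hterm : ∀ k ∈ Finset.range (n+1),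
        deriv (fun y => (n.choose k : ℝ) * (iteratedDeriv k f y * iteratedDeriv (n-k) g y)) x
        = (n.choose k : ℝ) * (iteratedDeriv (k+1) f x * iteratedDeriv (n-k) g x)
          + (n.choose k : ℝ) * (iteratedDeriv k f x * iteratedDeriv (n-k+1) g x) := by
      intro k _
      rw [deriv_const_mul (d := fun y => iteratedDeriv k f y * iteratedDeriv (n-k) g y) _ ((hdf k).mul (hdg (n-k))), deriv_fun_mul (hdf k) (hdg (n-k))]
      simp only [iteratedDeriv_succ]
      ring
    rw [Finset.sum_congr rfl hterm, Finset.sum_add_distrib]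
    have h2 : ∑ k ∈ Finset.range (n+1), (n.choose k : ℝ) *
        (iteratedDeriv k f x * iteratedDeriv (n-k+1) g x)
        = ∑ k ∈ Finset.range (n+1), (n.choose k : ℝ) *
        (iteratedDeriv k f x * iteratedDeriv (n+1-k) g x) := by
      refine Finset.sum_congr rfl (fun k hk => ?_)
      have : n - k + 1 = n + 1 - k :=
        (Nat.sub_add_comm (Nat.lt_succ_iff.mp (Finset.mem_range.mp hk))).symm
      rw [this]
    rw [h2]
    exact pascal_step (fun k => iteratedDeriv k f x) (fun k => iteratedDeriv k g x) n

lemma itD_add (f : ℝ → ℝ) (m n : ℕ) :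
    iteratedDeriv (n + m) f = iteratedDeriv n (iteratedDeriv m f) := by
  induction n with
  | zero => simp
  | succ n ih => rw [Nat.succ_add, iteratedDeriv_succ, ih, ← iteratedDeriv_succ]


/-- The Taylor coefficients of the Blasius series solution at the origin. -/
theorem blasius_taylor_coefficients
    (l : ℝ) (f : ℝ → ℝ)
    (hf : AnalyticAt ℝ f 0)
    (hODE : ∀ᶠ η in nhds (0 : ℝ),
      iteratedDeriv 3 f η + (1 / 2) * f η * iteratedDeriv 2 f η = 0)
    (hf0 : f 0 = 0) (hf'0 : deriv f 0 = 0)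
    (hf''0 : iteratedDeriv 2 f 0 = l)
    (C : ℕ → ℝ) (hC : ∀ n, C n = iteratedDeriv n f 0 / (Nat.factorial n)) :
    C 2 = l / 2 ∧ C 3 = 0 ∧ C 4 = 0 ∧
    C 5 = -l ^ 2 / (2 * Nat.factorial 5) ∧
    C 6 = 0 ∧ C 7 = 0 ∧
    C 8 = 11 * l ^ 3 / (2 ^ 2 * Nat.factorial 8) ∧
    C 9 = 0 ∧ C 10 = 0 ∧
    C 11 = -375 * l ^ 4 / (2 ^ 3 * Nat.factorial 11) := by
  obtain ⟨s, hsub, hs_open, hs0⟩ := mem_nhds_iff.mp (hf.eventually_analyticAt.and hODE)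
  have hA : AnalyticOnNhd ℝ f s := fun x hx => (hsub hx).1
  have hO : ∀ x ∈ s, iteratedDeriv 3 f x = -(1/2) * (f x * iteratedDeriv 2 f x) := by
    intro x hx
    have := (hsub hx).2
    linarith
  have key : ∀ n : ℕ, iteratedDeriv (n+3) f 0 = -(1/2) *
      ∑ k ∈ Finset.range (n+1), (n.choose k : ℝ) *
        (iteratedDeriv k f 0 * iteratedDeriv (n+2-k) f 0) := by
    intro n
    have hev : iteratedDeriv 3 f =ᶠ[nhds 0]
        (fun y => -(1/2) * (f y * iteratedDeriv 2 f y)) :=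
      Filter.eventually_of_mem (hs_open.mem_nhds hs0) hO
    have hmulA : AnalyticOnNhd ℝ (fun y => f y * iteratedDeriv 2 f y) s :=
      fun x hx => (hA x hx).mul (analytic_itD hA 2 x hx)
    have h2 := itD_const_mul hs_open hmulA (-(1/2) : ℝ) n 0 hs0
    have h3 := my_leibniz hs_open hA (analytic_itD hA 2) n 0 hs0
    rw [itD_add f 3 n, hev.iteratedDeriv_eq n, h2, h3]
    congr 1
    refine Finset.sum_congr rfl (fun k hk => ?_)
    have hk' : k ≤ n := Nat.lt_succ_iff.mp (Finset.mem_range.mp hk)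
    have hnk : n + 2 - k = n - k + 2 := by omega
    rw [hnk, itD_add f 2 (n - k)]
  have D0 : iteratedDeriv 0 f 0 = 0 := by simpa using hf0
  have D1 : iteratedDeriv 1 f 0 = 0 := by simpa [iteratedDeriv_one] using hf'0
  have D3 : iteratedDeriv 3 f 0 = 0 := by
    have h := key 0
    norm_num [Finset.sum_range_succ, D0] at h
    exact h
  have D4 : iteratedDeriv 4 f 0 = 0 := by
    have h := key 1
    norm_num [Finset.sum_range_succ, D0, D1] at h
    exact h
  have D5 : iteratedDeriv 5 f 0 = -(1/2) * l^2 := by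
    have h := key 2
    norm_num [Finset.sum_range_succ, D0, D1, hf''0] at h
    rw [h]; ring
  have D6 : iteratedDeriv 6 f 0 = 0 := by
    have h := key 3
    norm_num [Finset.sum_range_succ, D0, D1, D3, D4, hf''0] at h
    exact h
  have D7 : iteratedDeriv 7 f 0 = 0 := by
    have h := key 4
    norm_num [Finset.sum_range_succ, D0, D1, D3, D4, hf''0] at h
    exact h
  have D8 : iteratedDeriv 8 f 0 = 11/4 * l^3 := by
    have h := key 5
    norm_num [Finset.sum_range_succ, D0, D1, D3, D4, D5, D6, hf''0, show Nat.choose 5 2 = 10 from rfl] at h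
    rw [h]; ring
  have D9 : iteratedDeriv 9 f 0 = 0 := by
    have h := key 6
    norm_num [Finset.sum_range_succ, D0, D1, D3, D4, D5, D6, D7, hf''0] at h
    exact h
  have D10 : iteratedDeriv 10 f 0 = 0 := by
    have h := key 7
    norm_num [Finset.sum_range_succ, D0, D1, D3, D4, D5, D6, D7, D8, hf''0] at h
    exact h
  have D11 : iteratedDeriv 11 f 0 = -(375/8) * l^4 := by
    have h := key 8
    norm_num [Finset.sum_range_succ, D0, D1, D3, D4, D5, D6, D7, D8, D9, D10, hf''0, show Nat.choose 8 2 = 28 from rfl, show Nat.choose 8 5 = 56 from rfl] at h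
    rw [h]; ring
  refine ⟨?_, ?_, ?_, ?_, ?_, ?_, ?_, ?_, ?_, ?_⟩ <;>
    simp only [hC, hf''0, D3, D4, D5, D6, D7, D8, D9, D10, D11] <;>
    norm_num [Nat.factorial] <;> ring
end
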